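/- arXiv:1004.0244 — 2 statements merged into one kernel-verified Lean document; each statement's English description precedes it below -/
import Mathlib

section
/- Let n ≥ 1, let 0 < a_1 < ... < a_k < n, let d = gcd(n, a_1, ..., a_k), let G_s = ⟨a_1,...,a_{s-1}⟩ ⊆ Z_n, let L_1 be the order of a_1 in Z_n, and for 1 < s ≤ k let L_s = min{t ∈ ℕ, t > 0 : t·a_s ∈ G_s}. Then every x ∈ Z_n can be written uniquely as x = r + m_1·a_1 + ... + m_k·a_k in Z_n, where 0 ≤ r < d is the remainder of (a lift of) x modulo d and 0 ≤ m_s < L_s for all s. -/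
open Finset

/-- The subgroup generated by the first `t` generators. -/
def Hgrp {n k : ℕ} (A : Fin k → ZMod n) (t : ℕ) : AddSubgroup (ZMod n) :=
  AddSubgroup.closure (A '' {i | (i : ℕ) < t})

/-- Partial sum. -/
def Ssum {n k : ℕ} (A : Fin k → ZMod n) (m : Fin k → ℕ) (t : ℕ) : ZMod n :=
  ∑ i ∈ Finset.univ.filter (fun i : Fin k => (i : ℕ) < t), m i • A i

lemma Ssum_mem {n k : ℕ} (A : Fin k → ZMod n) (m : Fin k → ℕ) (t : ℕ) :
    Ssum A m t ∈ Hgrp A t := by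
  refine AddSubgroup.sum_mem _ fun i hi => ?_
  refine AddSubgroup.nsmul_mem _ (AddSubgroup.subset_closure ?_) _
  exact ⟨i, by simpa using hi, rfl⟩

lemma filter_succ {k : ℕ} (t : ℕ) (ht : t < k) :
    (Finset.univ.filter (fun i : Fin k => (i : ℕ) < t + 1)) =
      insert ⟨t, ht⟩ (Finset.univ.filter (fun i : Fin k => (i : ℕ) < t)) := by
  ext i
  simp [Nat.lt_succ_iff_lt_or_eq, Fin.ext_iff, or_comm]
  omega

lemma Ssum_succ {n k : ℕ} (A : Fin k → ZMod n) (m : Fin k → ℕ) (t : ℕ) (ht : t < k) :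
    Ssum A m (t + 1) = m ⟨t, ht⟩ • A ⟨t, ht⟩ + Ssum A m t := by
  rw [Ssum, filter_succ t ht, Finset.sum_insert (by simp)]
  rfl

lemma set_succ {k : ℕ} (t : ℕ) (ht : t < k) :
    {i : Fin k | (i : ℕ) < t + 1} = insert ⟨t, ht⟩ {i : Fin k | (i : ℕ) < t} := by
  ext i
  simp [Nat.lt_succ_iff_lt_or_eq, Fin.ext_iff, or_comm]
  omega

lemma Hgrp_succ {n k : ℕ} (A : Fin k → ZMod n) (t : ℕ) (ht : t < k) :
    Hgrp A (t + 1) = Hgrp A t ⊔ AddSubgroup.closure {A ⟨t, ht⟩} := by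
  rw [Hgrp, set_succ t ht, Set.image_insert_eq, Set.insert_eq,
    AddSubgroup.closure_union, Hgrp, sup_comm]

lemma exist_decomp {n k : ℕ} (hn : 0 < n) (A : Fin k → ZMod n) (L : Fin k → ℕ)
    (hLpos : ∀ s : Fin k, 0 < L s)
    (hLmem : ∀ s : Fin k, L s • A s ∈ Hgrp A (s : ℕ)) :
    ∀ t, t ≤ k → ∀ g ∈ Hgrp A t, ∃ m : Fin k → ℕ, (∀ i, m i < L i) ∧ g = Ssum A m t := by
  intro t
  induction t with
  | zero =>
    intro _ g hg
    refine ⟨fun _ => 0, fun i => hLpos i, ?_⟩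
    have h0 : Hgrp A 0 = ⊥ := by
      rw [Hgrp]
      convert AddSubgroup.closure_empty
      simp
    rw [h0] at hg
    simp only [AddSubgroup.mem_bot] at hg
    rw [hg, Ssum]
    simp
  | succ t ih =>
    intro ht g hg
    have htk : t < k := ht
    set j : Fin k := ⟨t, htk⟩ with hj
    rw [Hgrp_succ A t htk, AddSubgroup.mem_sup] at hg
    obtain ⟨g1, hg1, g2, hg2, hsum⟩ := hg
    rw [AddSubgroup.mem_closure_singleton] at hg2
    obtain ⟨z, hz⟩ := hg2
    -- reduce the integer coefficient to a natural number
    have hnA : (n : ℤ) • A j = 0 := by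
      rw [natCast_zsmul, nsmul_eq_mul, ZMod.natCast_self, zero_mul]
    have hzn : z • A j = ((z % (n : ℤ)).toNat) • A j := by
      conv_lhs => rw [← Int.mul_ediv_add_emod z (n : ℤ)]
      rw [add_zsmul, mul_comm, mul_zsmul, hnA, smul_zero, zero_add]
      conv_lhs => rw [← Int.toNat_of_nonneg (Int.emod_nonneg z (by exact_mod_cast hn.ne'))]
      rw [natCast_zsmul]
    set t0 : ℕ := (z % (n : ℤ)).toNat with ht0
    -- reduce t0 mod L j
    have ht0split : t0 • A j = (t0 / L j) • (L j • A j) + (t0 % L j) • A j := by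
      conv_lhs => rw [← Nat.div_add_mod t0 (L j)]
      rw [add_nsmul, mul_nsmul]
    have hg' : g1 + (t0 / L j) • (L j • A j) ∈ Hgrp A t := by
      exact AddSubgroup.add_mem _ hg1 (AddSubgroup.nsmul_mem _ (hLmem j) _)
    obtain ⟨m', hm'lt, hm'⟩ := ih (le_of_lt htk) _ hg'
    refine ⟨Function.update m' j (t0 % L j), ?_, ?_⟩
    · intro i
      by_cases hij : i = j
      · subst hij
        rw [Function.update_self]
        exact Nat.mod_lt _ (hLpos _)
      · rw [Function.update_of_ne hij]; exact hm'lt i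
    · rw [Ssum_succ A _ t htk]
      have hfix : Ssum A (Function.update m' j (t0 % L j)) t = Ssum A m' t := by
        refine Finset.sum_congr rfl fun i hi => ?_
        have : i ≠ j := by
          simp only [Finset.mem_filter] at hi
          intro h; rw [h] at hi; exact absurd hi.2 (lt_irrefl t)
        rw [Function.update_of_ne this]
      rw [hfix, ← hm', Function.update_self, ← hsum, ← hz, hzn, ht0split]
      abel

lemma uniq_decomp {n k : ℕ} (A : Fin k → ZMod n) (L : Fin k → ℕ)
    (hLmin : ∀ (s : Fin k) (t' : ℕ), 0 < t' → t' • A s ∈ Hgrp A (s : ℕ) → L s ≤ t') :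
    ∀ t, t ≤ k → ∀ m m' : Fin k → ℕ, (∀ i, m i < L i) → (∀ i, m' i < L i) →
      Ssum A m t = Ssum A m' t → ∀ i : Fin k, (i : ℕ) < t → m i = m' i := by
  intro t
  induction t with
  | zero => intro _ _ _ _ _ _ i hi; omega
  | succ t ih =>
    intro ht m m' hm hm' heq i hi
    have htk : t < k := ht
    set j : Fin k := ⟨t, htk⟩ with hj
    rw [Ssum_succ A m t htk, Ssum_succ A m' t htk] at heq
    have key : ∀ u u' : Fin k → ℕ, (∀ i, u i < L i) →
        u j • A j + Ssum A u t = u' j • A j + Ssum A u' t → u' j ≤ u j → u j = u' j := by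
      intro u u' hu hequ hle
      by_contra hne
      have hpos : 0 < u j - u' j := by omega
      have hsub : (u j - u' j) • A j = Ssum A u' t - Ssum A u t := by
        rw [sub_nsmul _ hle]
        linear_combination hequ
      have hmem : (u j - u' j) • A j ∈ Hgrp A t :=
        hsub ▸ AddSubgroup.sub_mem _ (Ssum_mem A u' t) (Ssum_mem A u t)
      have := hLmin j _ hpos hmem
      have := hu j
      omega
    have hjj : m j = m' j := by
      rcases le_total (m' j) (m j) with h | h
      · exact key m m' hm heq h
      · exact (key m' m hm' heq.symm h).symm
    rcases Nat.lt_succ_iff_lt_or_eq.mp hi with hi' | hi'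
    · have heq' : Ssum A m t = Ssum A m' t := by
        rw [hjj] at heq
        exact add_left_cancel heq
      exact ih (le_of_lt htk) m m' hm hm' heq' i hi'
    · have : i = j := Fin.ext hi'
      rw [this]; exact hjj

lemma gcd_mem {n : ℕ} (P : AddSubgroup (ZMod n)) (x y : ℕ)
    (hx : ((x : ℕ) : ZMod n) ∈ P) (hy : ((y : ℕ) : ZMod n) ∈ P) :
    ((Nat.gcd x y : ℕ) : ZMod n) ∈ P := by
  have hb := Nat.gcd_eq_gcd_ab x y
  have : ((Nat.gcd x y : ℕ) : ZMod n) =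
      (Nat.gcdA x y) • ((x : ℕ) : ZMod n) + (Nat.gcdB x y) • ((y : ℕ) : ZMod n) := by
    rw [zsmul_eq_mul, zsmul_eq_mul]
    have : (((Nat.gcd x y : ℤ) : ZMod n)) = ((Nat.gcd x y : ℕ) : ZMod n) := by push_cast; ring
    rw [← this, hb]
    push_cast
    ring
  rw [this]
  exact AddSubgroup.add_mem _ (AddSubgroup.zsmul_mem _ hx _) (AddSubgroup.zsmul_mem _ hy _)

lemma finset_gcd_mem {n : ℕ} {ι : Type*} (P : AddSubgroup (ZMod n)) (f : ι → ℕ)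
    (s : Finset ι) (hf : ∀ i ∈ s, ((f i : ℕ) : ZMod n) ∈ P) :
    ((s.gcd f : ℕ) : ZMod n) ∈ P := by
  classical
  induction s using Finset.induction with
  | empty => simp [AddSubgroup.zero_mem]
  | insert i s' hnotmem ih =>
    rw [Finset.gcd_insert]
    exact gcd_mem P _ _ (hf i (Finset.mem_insert_self i s'))
      (ih fun j hj => hf j (Finset.mem_insert_of_mem hj))

/-- decomposition lemma: with `d = gcd(n, a_1, …, a_k)`,
`G_s = ⟨a_1, …, a_{s-1}⟩ ≤ ZMod n` and `L_s = min {t > 0 : t·a_s ∈ G_s}`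
(so `L_1` is the order of `a_1` in `ZMod n`), every `x ∈ ZMod n` is uniquely
`x = r + m_1 a_1 + ⋯ + m_k a_k` with `r = x mod d` (`0 ≤ r < d`) and
`0 ≤ m_s < L_s` for all `s`. -/
theorem circulant_unique_decomposition (n k : ℕ) (hn : 0 < n)
    (a : Fin k → ℕ) (hpos : ∀ i, 0 < a i) (hlt : ∀ i, a i < n) (hmono : StrictMono a)
    (d : ℕ) (hd : d = Nat.gcd n (Finset.univ.gcd a))
    (L : Fin k → ℕ)
    (hL : ∀ s : Fin k, L s = sInf {t : ℕ | 0 < t ∧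
      t • (((a s : ℕ) : ZMod n)) ∈
        AddSubgroup.closure ((fun i : Fin k => ((a i : ℕ) : ZMod n)) '' {i | i < s})}) :
    ∀ x : ZMod n, ∃! p : ℕ × (Fin k → ℕ),
      p.1 = x.val % d ∧ (∀ s, p.2 s < L s) ∧
      x = (p.1 : ZMod n) + ∑ s : Fin k, (p.2 s : ZMod n) * ((a s : ℕ) : ZMod n) := by
  intro x
  haveI : NeZero n := ⟨hn.ne'⟩
  set A : Fin k → ZMod n := fun i => ((a i : ℕ) : ZMod n) with hA
  have hLset : ∀ s : Fin k, L s = sInf {t : ℕ | 0 < t ∧ t • A s ∈ Hgrp A (s : ℕ)} := by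
    intro s; rw [hL s]; rfl
  have hset : ∀ s : Fin k, ∃ t, t ∈ {t : ℕ | 0 < t ∧ t • A s ∈ Hgrp A (s : ℕ)} := by
    intro s
    refine ⟨n, hn, ?_⟩
    have hz : n • A s = 0 := by
      simp only [hA, nsmul_eq_mul, ZMod.natCast_self, zero_mul]
    rw [hz]; exact AddSubgroup.zero_mem _
  have hLmem' : ∀ s : Fin k, 0 < L s ∧ L s • A s ∈ Hgrp A (s : ℕ) := by
    intro s
    have h := Nat.sInf_mem (hset s)
    rw [← hLset s] at h
    exact h
  have hLpos : ∀ s, 0 < L s := fun s => (hLmem' s).1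
  have hLmem : ∀ s : Fin k, L s • A s ∈ Hgrp A (s : ℕ) := fun s => (hLmem' s).2
  have hLmin : ∀ (s : Fin k) (t' : ℕ), 0 < t' → t' • A s ∈ Hgrp A (s : ℕ) → L s ≤ t' := by
    intro s t' h1 h2
    rw [hLset s]
    exact Nat.sInf_le ⟨h1, h2⟩
  have hain : ∀ i : Fin k, ((a i : ℕ) : ZMod n) ∈ Hgrp A k := fun i =>
    AddSubgroup.subset_closure ⟨i, i.isLt, rfl⟩
  have hdmem : ((d : ℕ) : ZMod n) ∈ Hgrp A k := by
    rw [hd]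
    refine gcd_mem _ n _ ?_ (finset_gcd_mem _ a _ (fun i _ => hain i))
    rw [ZMod.natCast_self]; exact AddSubgroup.zero_mem _
  set r : ℕ := x.val % d with hr
  have h1 : ((x.val : ℕ) : ZMod n) = x := ZMod.natCast_rightInverse x
  have hx : x = (r : ZMod n) + (x.val / d) • ((d : ℕ) : ZMod n) := by
    calc x = ((x.val : ℕ) : ZMod n) := h1.symm
    _ = ((d * (x.val / d) + x.val % d : ℕ) : ZMod n) := by rw [Nat.div_add_mod]
    _ = (r : ZMod n) + (x.val / d) • ((d : ℕ) : ZMod n) := by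
        rw [nsmul_eq_mul]; push_cast; ring
  obtain ⟨m, hmlt, hSm⟩ := exist_decomp hn A L hLpos hLmem k le_rfl _
    (AddSubgroup.nsmul_mem _ hdmem (x.val / d))
  have hconv : ∀ mm : Fin k → ℕ,
      (∑ s : Fin k, ((mm s : ℕ) : ZMod n) * ((a s : ℕ) : ZMod n)) = Ssum A mm k := by
    intro mm
    rw [Ssum, Finset.filter_true_of_mem (fun i _ => i.isLt)]
    exact Finset.sum_congr rfl fun i _ => (nsmul_eq_mul _ _).symm
  have hxm : x = (r : ZMod n) + Ssum A m k := by rw [← hSm]; exact hx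
  refine ⟨(r, m), ⟨hr, hmlt, by rw [hconv]; exact hxm⟩, ?_⟩
  rintro ⟨q1, q2⟩ ⟨hq1, hq2, hq3⟩
  simp only at hq1 hq2 hq3
  have hq1' : q1 = r := hq1
  have hsums : Ssum A q2 k = Ssum A m k := by
    rw [hq1', hconv] at hq3
    exact (add_left_cancel (hxm.symm.trans hq3)).symm
  have hall := uniq_decomp A L hLmin k le_rfl q2 m hq2 hmlt hsums
  simp only [Prod.mk.injEq]
  exact ⟨hq1', funext fun i => hall i i.isLt⟩
end

section
/- Let n = 2^r·l, a_1 = 2^{r_1}·l_1, a_2 = 2^{r_2}·l_2 with l, l_1, l_2 odd and 0 < r_2 < r_1 < r, and let a_3 be odd with a_i ≠ ±2a_{i+1} mod n for i = 1,2. Then the circulant graph C_n(a_1, a_2, a_3) is triangle-free, i.e., no a_i ≡ ±a_j ± a_l (mod n) holds nontrivially. -/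
/-- The circulant graph `C_n(a_1, …, a_k)` on `ZMod n`. -/
def circulant (n : ℕ) {k : ℕ} (a : Fin k → ℕ) : SimpleGraph (ZMod n) :=
  SimpleGraph.circulantGraph (Set.range fun i => ((a i : ℕ) : ZMod n))

set_option maxHeartbeats 3200000 in
private lemma key_aux (n a₁ a₂ a₃ r r₁ r₂ l l₁ l₂ : ℕ)
    (hn : n = 2 ^ r * l) (ha₁ : a₁ = 2 ^ r₁ * l₁) (ha₂ : a₂ = 2 ^ r₂ * l₂)
    (hl₁ : Odd l₁) (hl₂ : Odd l₂) (hodd₃ : Odd a₃)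
    (hr₂ : 0 < r₂) (hr₁₂ : r₂ < r₁) (hr : r₁ < r)
    (hn1a : ¬ ((n:ℤ) ∣ ((a₁:ℤ) - 2*(a₂:ℤ))))
    (hn1b : ¬ ((n:ℤ) ∣ ((a₁:ℤ) + 2*(a₂:ℤ))))
    (hn2a : ¬ ((n:ℤ) ∣ ((a₂:ℤ) - 2*(a₃:ℤ))))
    (hn2b : ¬ ((n:ℤ) ∣ ((a₂:ℤ) + 2*(a₃:ℤ))))
    (x y z : ℕ) (e₁ e₂ e₃ : ℤ)
    (hx : x = a₁ ∨ x = a₂ ∨ x = a₃) (hy : y = a₁ ∨ y = a₂ ∨ y = a₃)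
    (hz : z = a₁ ∨ z = a₂ ∨ z = a₃)
    (he₁ : e₁ = 1 ∨ e₁ = -1) (he₂ : e₂ = 1 ∨ e₂ = -1) (he₃ : e₃ = 1 ∨ e₃ = -1) :
    ¬ ((n:ℤ) ∣ (e₁ * (x:ℤ) + e₂ * (y:ℤ) + e₃ * (z:ℤ))) := by
  intro hdvd
  -- basic divisibility facts
  have h2N : (2:ℤ) ∣ (n:ℤ) := by
    subst hn; push_cast
    exact Dvd.dvd.mul_right (dvd_pow_self 2 (by omega)) _
  have h4N : (4:ℤ) ∣ (n:ℤ) := by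
    subst hn; push_cast
    calc (4:ℤ) = 2^2 := by norm_num
    _ ∣ 2^r * l := dvd_mul_of_dvd_left (pow_dvd_pow 2 (by omega)) _
  have hP1N : (2:ℤ)^(r₁+1) ∣ (n:ℤ) := by
    subst hn; push_cast
    exact dvd_mul_of_dvd_left (pow_dvd_pow 2 (by omega)) _
  have hP2N : (2:ℤ)^(r₂+1) ∣ (n:ℤ) := by
    subst hn; push_cast
    exact dvd_mul_of_dvd_left (pow_dvd_pow 2 (by omega)) _
  have hA14 : (4:ℤ) ∣ (a₁:ℤ) := by
    subst ha₁; push_cast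
    calc (4:ℤ) = 2^2 := by norm_num
    _ ∣ 2^r₁ := pow_dvd_pow 2 (by omega)
    _ ∣ 2^r₁ * l₁ := dvd_mul_right _ _
  have h2A1 : (2:ℤ) ∣ (a₁:ℤ) := dvd_trans (by norm_num) hA14
  have h2A2 : (2:ℤ) ∣ (a₂:ℤ) := by
    subst ha₂; push_cast
    exact dvd_mul_of_dvd_left (dvd_pow_self 2 (by omega)) _
  have ho₃ : (a₃:ℤ) % 2 = 1 := by
    have := Nat.odd_iff.mp hodd₃; omega
  have hP2A1 : (2:ℤ)^(r₂+1) ∣ (a₁:ℤ) := by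
    subst ha₁; push_cast
    exact dvd_mul_of_dvd_left (pow_dvd_pow 2 (by omega)) _
  have hL1 : (l₁:ℤ) % 2 = 1 := by have := Nat.odd_iff.mp hl₁; omega
  have hL2 : (l₂:ℤ) % 2 = 1 := by have := Nat.odd_iff.mp hl₂; omega
  have lemP2 : ∀ c₁ c₂ : ℤ, c₂ % 2 = 1 →
      ¬ ((2:ℤ)^(r₂+1) ∣ (2*c₁*(a₁:ℤ) + c₂*(a₂:ℤ))) := by
    intro c₁ c₂ hc h
    obtain ⟨m, hm⟩ := hP2A1
    obtain ⟨t, ht⟩ := h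
    have hA2 : (a₂:ℤ) = 2^r₂ * (l₂:ℤ) := by subst ha₂; push_cast; ring
    rw [hm, hA2] at ht
    have hcancel : (4*c₁*m + c₂ * (l₂:ℤ)) = 2*t := by
      have h2 : (2:ℤ)^r₂ * (4*c₁*m + c₂ * (l₂:ℤ)) = 2^r₂ * (2*t) := by
        linear_combination ht
      exact mul_left_cancel₀ (pow_ne_zero r₂ two_ne_zero) h2
    obtain ⟨u, hu⟩ := (Int.odd_iff.mpr hc).mul (Int.odd_iff.mpr hL2)
    rw [hu] at hcancel
    have h1 : (2:ℤ) ∣ 1 := ⟨t - 2*c₁*m - u, by linarith⟩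
    norm_num at h1
  have lemP1 : ∀ c : ℤ, c % 2 = 1 → ¬ ((2:ℤ)^(r₁+1) ∣ c * (a₁:ℤ)) := by
    intro c hc h
    obtain ⟨t, ht⟩ := h
    have hA1 : (a₁:ℤ) = 2^r₁ * (l₁:ℤ) := by subst ha₁; push_cast; ring
    rw [hA1] at ht
    have hcancel : c * (l₁:ℤ) = 2*t := by
      have h2 : (2:ℤ)^r₁ * (c * (l₁:ℤ)) = 2^r₁ * (2*t) := by
        linear_combination ht
      exact mul_left_cancel₀ (pow_ne_zero r₁ two_ne_zero) h2
    obtain ⟨u, hu⟩ := (Int.odd_iff.mpr hc).mul (Int.odd_iff.mpr hL1)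
    rw [hu] at hcancel
    omega
  have hn1c : ¬ ((n:ℤ) ∣ (2*(a₂:ℤ) - (a₁:ℤ))) := fun h => hn1a (by
    rw [show ((a₁:ℤ) - 2*(a₂:ℤ)) = -(2*(a₂:ℤ) - (a₁:ℤ)) by ring]
    exact dvd_neg.mpr h)
  have hn1d : ¬ ((n:ℤ) ∣ (-(a₁:ℤ) - 2*(a₂:ℤ))) := fun h => hn1b (by
    rw [show ((a₁:ℤ) + 2*(a₂:ℤ)) = -(-(a₁:ℤ) - 2*(a₂:ℤ)) by ring]
    exact dvd_neg.mpr h)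
  have hn2c : ¬ ((n:ℤ) ∣ (2*(a₃:ℤ) - (a₂:ℤ))) := fun h => hn2a (by
    rw [show ((a₂:ℤ) - 2*(a₃:ℤ)) = -(2*(a₃:ℤ) - (a₂:ℤ)) by ring]
    exact dvd_neg.mpr h)
  have hn2d : ¬ ((n:ℤ) ∣ (-(a₂:ℤ) - 2*(a₃:ℤ))) := fun h => hn2b (by
    rw [show ((a₂:ℤ) + 2*(a₃:ℤ)) = -(-(a₂:ℤ) - 2*(a₃:ℤ)) by ring]
    exact dvd_neg.mpr h)
  clear hn ha₁ ha₂ hodd₃ hl₁ hl₂ hP2A1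
  rcases hx with rfl|rfl|rfl <;> rcases hy with rfl|rfl|rfl <;> rcases hz with rfl|rfl|rfl <;>
    rcases he₁ with rfl|rfl <;> rcases he₂ with rfl|rfl <;> rcases he₃ with rfl|rfl <;>
  first
  | (have h2D := h2N.trans hdvd; omega)
  | (have h4D := h4N.trans hdvd; omega)
  | (refine hn1a ?_; convert hdvd using 1; ring1)
  | (refine hn1b ?_; convert hdvd using 1; ring1)
  | (refine hn1c ?_; convert hdvd using 1; ring1)
  | (refine hn1d ?_; convert hdvd using 1; ring1)
  | (refine hn2a ?_; convert hdvd using 1; ring1)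
  | (refine hn2b ?_; convert hdvd using 1; ring1)
  | (refine hn2c ?_; convert hdvd using 1; ring1)
  | (refine hn2d ?_; convert hdvd using 1; ring1)
  | (refine lemP1 1 (by norm_num) ?_; convert Int.dvd_trans hP1N hdvd using 1; ring1)
  | (refine lemP1 (-1) (by norm_num) ?_; convert Int.dvd_trans hP1N hdvd using 1; ring1)
  | (refine lemP1 3 (by norm_num) ?_; convert Int.dvd_trans hP1N hdvd using 1; ring1)
  | (refine lemP1 (-3) (by norm_num) ?_; convert Int.dvd_trans hP1N hdvd using 1; ring1)
  | (refine lemP2 0 1 (by norm_num) ?_; convert Int.dvd_trans hP2N hdvd using 1; ring1)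
  | (refine lemP2 0 (-1) (by norm_num) ?_; convert Int.dvd_trans hP2N hdvd using 1; ring1)
  | (refine lemP2 0 3 (by norm_num) ?_; convert Int.dvd_trans hP2N hdvd using 1; ring1)
  | (refine lemP2 0 (-3) (by norm_num) ?_; convert Int.dvd_trans hP2N hdvd using 1; ring1)
  | (refine lemP2 1 1 (by norm_num) ?_; convert Int.dvd_trans hP2N hdvd using 1; ring1)
  | (refine lemP2 1 (-1) (by norm_num) ?_; convert Int.dvd_trans hP2N hdvd using 1; ring1)
  | (refine lemP2 (-1) 1 (by norm_num) ?_; convert Int.dvd_trans hP2N hdvd using 1; ring1)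
  | (refine lemP2 (-1) (-1) (by norm_num) ?_; convert Int.dvd_trans hP2N hdvd using 1; ring1)

/-- let `n = 2^r·l`, `a₁ = 2^{r₁}·l₁`, `a₂ = 2^{r₂}·l₂` with
`l, l₁, l₂` odd, `0 < r₂ < r₁ < r`, `a₃` odd, and `aᵢ ≢ ±2·a_{i+1} (mod n)` for
`i = 1, 2`.  Then the circulant graph `C_n(a₁, a₂, a₃)` is triangle-free. -/
theorem circulant_2adic_triangle_free (n a₁ a₂ a₃ r r₁ r₂ l l₁ l₂ : ℕ)
    (hn : n = 2 ^ r * l) (ha₁ : a₁ = 2 ^ r₁ * l₁) (ha₂ : a₂ = 2 ^ r₂ * l₂)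
    (hl : Odd l) (hl₁ : Odd l₁) (hl₂ : Odd l₂) (hodd₃ : Odd a₃)
    (hr₂ : 0 < r₂) (hr₁₂ : r₂ < r₁) (hr : r₁ < r)
    (hne₁ : ((a₁ : ZMod n) ≠ 2 * (a₂ : ZMod n)) ∧ ((a₁ : ZMod n) ≠ -(2 * (a₂ : ZMod n))))
    (hne₂ : ((a₂ : ZMod n) ≠ 2 * (a₃ : ZMod n)) ∧ ((a₂ : ZMod n) ≠ -(2 * (a₃ : ZMod n)))) :
    (circulant n ![a₁, a₂, a₃]).CliqueFree 3 := by
  have hn1a : ¬ ((n:ℤ) ∣ ((a₁:ℤ) - 2*(a₂:ℤ))) := by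
    intro h
    apply hne₁.1
    have h0 : ((((a₁:ℤ) - 2*(a₂:ℤ)) : ℤ) : ZMod n) = 0 :=
      (ZMod.intCast_zmod_eq_zero_iff_dvd _ _).mpr h
    push_cast at h0
    linear_combination h0
  have hn1b : ¬ ((n:ℤ) ∣ ((a₁:ℤ) + 2*(a₂:ℤ))) := by
    intro h
    apply hne₁.2
    have h0 : ((((a₁:ℤ) + 2*(a₂:ℤ)) : ℤ) : ZMod n) = 0 :=
      (ZMod.intCast_zmod_eq_zero_iff_dvd _ _).mpr h
    push_cast at h0
    linear_combination h0
  have hn2a : ¬ ((n:ℤ) ∣ ((a₂:ℤ) - 2*(a₃:ℤ))) := by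
    intro h
    apply hne₂.1
    have h0 : ((((a₂:ℤ) - 2*(a₃:ℤ)) : ℤ) : ZMod n) = 0 :=
      (ZMod.intCast_zmod_eq_zero_iff_dvd _ _).mpr h
    push_cast at h0
    linear_combination h0
  have hn2b : ¬ ((n:ℤ) ∣ ((a₂:ℤ) + 2*(a₃:ℤ))) := by
    intro h
    apply hne₂.2
    have h0 : ((((a₂:ℤ) + 2*(a₃:ℤ)) : ℤ) : ZMod n) = 0 :=
      (ZMod.intCast_zmod_eq_zero_iff_dvd _ _).mpr h
    push_cast at h0
    linear_combination h0
  have key := key_aux n a₁ a₂ a₃ r r₁ r₂ l l₁ l₂ hn ha₁ ha₂ hl₁ hl₂ hodd₃ hr₂ hr₁₂ hr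
    hn1a hn1b hn2a hn2b
  intro t ht
  rw [SimpleGraph.is3Clique_iff] at ht
  obtain ⟨x, y, z, hxy, hxz, hyz, -⟩ := ht
  have adj : ∀ u v : ZMod n, (circulant n ![a₁,a₂,a₃]).Adj u v →
      ∃ (c : ℕ) (e : ℤ), (c = a₁ ∨ c = a₂ ∨ c = a₃) ∧ (e = 1 ∨ e = -1) ∧
        u - v = (e : ZMod n) * (c : ZMod n) := by
    intro u v huv
    rw [circulant, SimpleGraph.circulantGraph, SimpleGraph.fromRel_adj] at huv
    obtain ⟨-, h | h⟩ := huv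
    · obtain ⟨i, hi⟩ := h
      refine ⟨![a₁,a₂,a₃] i, 1, ?_, Or.inl rfl, ?_⟩
      · fin_cases i <;> simp
      · rw [← hi]; push_cast; ring
    · obtain ⟨i, hi⟩ := h
      refine ⟨![a₁,a₂,a₃] i, -1, ?_, Or.inr rfl, ?_⟩
      · fin_cases i <;> simp
      · rw [show u - v = -(v - u) by ring, ← hi]; push_cast; ring
  obtain ⟨c₁, e₁, hc₁, he₁, h₁⟩ := adj x y hxy
  obtain ⟨c₂, e₂, hc₂, he₂, h₂⟩ := adj y z hyz
  obtain ⟨c₃, e₃, hc₃, he₃, h₃⟩ := adj x z hxz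
  have hsum : ((e₁ * (c₁:ℤ) + e₂ * (c₂:ℤ) + (-e₃) * (c₃:ℤ) : ℤ) : ZMod n) = 0 := by
    push_cast
    linear_combination -h₁ - h₂ + h₃
  have hdvd : (n:ℤ) ∣ (e₁ * (c₁:ℤ) + e₂ * (c₂:ℤ) + (-e₃) * (c₃:ℤ)) :=
    (ZMod.intCast_zmod_eq_zero_iff_dvd _ _).mp hsum
  exact key c₁ c₂ c₃ e₁ e₂ (-e₃) hc₁ hc₂ hc₃ he₁ he₂
    (by rcases he₃ with h|h <;> simp [h]) hdvd
end
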